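/- Let X_1, …, X_N be Polish spaces and let μ_i be a Borel probability measure on X_i with compact support, for i = 1,…,N. Let c : X_1 × ⋯ × X_N → ℝ ∪ {+∞} be continuous. If γ ∈ Π(μ_1,…,μ_N) is an infinitely cyclically monotone plan for c, then γ is optimal for the L^∞ transport problem, i.e. it minimizes C_∞[γ'] = γ'-esssup c over γ' ∈ Π(μ_1,…,μ_N). -/

import Mathlib

open MeasureTheory
open scoped ENNReal

/-- A set `Γ` is infinitely `c`-cyclically monotone (multimarginal sense): permuting the
coordinates (other than the first) of any finite family of points of `Γ` does not
decrease the maximal cost. -/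
def InfinitelyCCyclicallyMonotone {N : ℕ} {X : Fin (N + 1) → Type*}
    (c : (∀ j, X j) → EReal) (Γ : Set (∀ j, X j)) : Prop :=
  ∀ (k : ℕ) (p : Fin k → ∀ j, X j), (∀ i, p i ∈ Γ) →
    ∀ σ : Fin (N + 1) → Equiv.Perm (Fin k), σ 0 = 1 →
      ⨆ i, c (p i) ≤ ⨆ i, c (fun j => p (σ j i) j)

open Finset in
lemma rat_approx {ι : Type*} [Fintype ι] [DecidableEq ι] :
    ∀ (n : ℕ) (L : List (ι → ℚ)) (_ : L.length = n) (x : ι → ℝ)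
      (_ : ∀ d ∈ L, ∑ j, (d j : ℝ) * x j = 0) (ε : ℝ) (_ : 0 < ε),
      ∃ q : ι → ℚ,
      (∀ d ∈ L, ∑ j, d j * q j = 0) ∧ ∀ j, |x j - (q j : ℝ)| < ε := by
  intro n
  induction n with
  | zero =>
      intro L hL x hx ε hε
      rw [List.length_eq_zero_iff] at hL
      subst hL
      refine ⟨fun j => (exists_rat_near (x j) hε).choose, by simp, fun j => ?_⟩
      exact (exists_rat_near (x j) hε).choose_spec
  | succ n ih =>
      rintro (_ | ⟨cc, L⟩) hL x hx ε hε
      · simp at hL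
      have hLn : L.length = n := by simpa using hL
      by_cases hc : cc = 0
      · obtain ⟨q, hq1, hq2⟩ := ih L hLn x (fun d hd => hx d (List.mem_cons_of_mem _ hd)) ε hε
        refine ⟨q, ?_, hq2⟩
        intro d hd
        rcases List.mem_cons.mp hd with rfl | hd
        · simp [hc]
        · exact hq1 d hd
      · obtain ⟨j0, hj0⟩ := Function.ne_iff.1 hc
        simp only [Pi.zero_apply] at hj0
        set C : ℝ := ∑ j, |(cc j : ℝ)| with hC
        have hC0 : 0 ≤ C := Finset.sum_nonneg fun j _ => abs_nonneg _
        have hcj0 : (0:ℝ) < |(cc j0 : ℝ)| := by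
          simp only [abs_pos, ne_eq, Rat.cast_eq_zero]; exact hj0
        set ε' : ℝ := min (ε/2) ((ε/2) * |(cc j0 : ℝ)| / (1 + C)) with hε'
        have hε'pos : 0 < ε' := by
          apply lt_min (by linarith)
          positivity
        have hε'le : ε' ≤ ε/2 := min_le_left _ _
        set L' : List (ι → ℚ) := L.map (fun d => d - (d j0 / cc j0) • cc) with hL'
        have hccx : ∑ j, (cc j : ℝ) * x j = 0 := hx cc List.mem_cons_self
        have hx' : ∀ d' ∈ L', ∑ j, (d' j : ℝ) * x j = 0 := by
          intro d' hd'
          rw [hL', List.mem_map] at hd'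
          obtain ⟨d, hd, rfl⟩ := hd'
          have hdx := hx d (List.mem_cons_of_mem _ hd)
          have hterm : ∀ j, ((d - (d j0 / cc j0) • cc) j : ℝ) * x j
              = (d j : ℝ) * x j - ((d j0 : ℝ) / (cc j0 : ℝ)) * ((cc j : ℝ) * x j) := by
            intro j; simp only [Pi.sub_apply, Pi.smul_apply, smul_eq_mul]; push_cast; ring
          rw [Finset.sum_congr rfl (fun j _ => hterm j), Finset.sum_sub_distrib,
            ← Finset.mul_sum, hdx, hccx, mul_zero, sub_zero]
        obtain ⟨q', hq'1, hq'2⟩ := ih L' (by simp [hL', hLn]) x hx' ε' hε'pos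
        set ρ : ℚ := q' j0 - (∑ j, cc j * q' j) / cc j0 with hρ
        set q : ι → ℚ := Function.update q' j0 ρ with hqdef
        have hsum_q : ∀ d : ι → ℚ, ∑ j, d j * q j
            = ∑ j, d j * q' j + d j0 * (ρ - q' j0) := by
          intro d
          rw [hqdef, ← Finset.add_sum_erase _ (fun j => d j * Function.update q' j0 ρ j)
              (mem_univ j0),
            ← Finset.add_sum_erase _ (fun j => d j * q' j) (mem_univ j0)]
          have : ∑ j ∈ univ.erase j0, d j * Function.update q' j0 ρ j
              = ∑ j ∈ univ.erase j0, d j * q' j :=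
            Finset.sum_congr rfl fun j hj => by
              rw [Function.update_of_ne (Finset.ne_of_mem_erase hj)]
          rw [this, Function.update_self]
          ring
        have hccq : ∑ j, cc j * q j = 0 := by
          rw [hsum_q, hρ]
          field_simp
          ring
        refine ⟨q, ?_, ?_⟩
        · intro d hd
          rcases List.mem_cons.mp hd with rfl | hd
          · exact hccq
          · have hd' := hq'1 _ (List.mem_map_of_mem (f := fun d => d - (d j0 / cc j0) • cc) hd)
            have expand : ∑ j, ((d - (d j0 / cc j0) • cc) j) * q' j
                = ∑ j, d j * q' j - (d j0 / cc j0) * ∑ j, cc j * q' j := by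
              rw [Finset.mul_sum, ← Finset.sum_sub_distrib]
              apply Finset.sum_congr rfl
              intro j _
              simp only [Pi.sub_apply, Pi.smul_apply, smul_eq_mul]; ring
            rw [expand] at hd'
            rw [hsum_q d]
            have h1 : ∑ j, d j * q' j = (d j0 / cc j0) * ∑ j, cc j * q' j := by linarith
            rw [h1, hρ]
            field_simp
            ring
        · intro j
          by_cases hj : j = j0
          · subst hj
            have hqj : (q j : ℝ) = (ρ : ℝ) := by rw [hqdef]; rw [Function.update_self]
            have hρr : (ρ : ℝ) = (q' j : ℝ) - (∑ j', (cc j' : ℝ) * (q' j' : ℝ)) / (cc j : ℝ) := by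
              rw [hρ]; push_cast; ring
            have key : x j - (ρ:ℝ)
                = (x j - q' j) - (∑ j', (cc j':ℝ) * (x j' - q' j')) / (cc j : ℝ) := by
              rw [hρr]
              have hsplit : ∑ j', (cc j':ℝ) * (x j' - q' j')
                  = ∑ j', (cc j':ℝ) * x j' - ∑ j', (cc j':ℝ) * (q' j' : ℝ) := by
                rw [← Finset.sum_sub_distrib]
                apply Finset.sum_congr rfl
                intro j' _; ring
              rw [hsplit, hccx]
              ring
            have hbound : |∑ j', (cc j':ℝ) * (x j' - q' j')| ≤ C * ε' := by
              calc |∑ j', (cc j':ℝ) * (x j' - q' j')| ≤ ∑ j', |(cc j':ℝ) * (x j' - q' j')| :=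
                    Finset.abs_sum_le_sum_abs _ _
                _ ≤ ∑ j', |(cc j':ℝ)| * ε' := by
                    apply Finset.sum_le_sum
                    intro j' _
                    rw [abs_mul]
                    exact mul_le_mul_of_nonneg_left (le_of_lt (hq'2 j')) (abs_nonneg _)
                _ = C * ε' := by rw [← Finset.sum_mul]
            have h2 : C * ε' ≤ ε / 2 * |(cc j:ℝ)| := by
              have hm := min_le_right (ε/2) ((ε/2) * |(cc j:ℝ)| / (1 + C))
              have : C * ε' ≤ C * ((ε/2) * |(cc j:ℝ)| / (1 + C)) :=
                mul_le_mul_of_nonneg_left hm hC0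
              have h1C : (0:ℝ) < 1 + C := by linarith
              have hA : (0:ℝ) ≤ ε / 2 * |(cc j:ℝ)| := by positivity
              have h4 : C * ((ε/2) * |(cc j:ℝ)| / (1 + C)) ≤ ε / 2 * |(cc j:ℝ)| := by
                rw [mul_div_assoc']
                rw [div_le_iff₀ h1C]
                nlinarith
              linarith
            have h3 : |∑ j', (cc j':ℝ) * (x j' - q' j')| / |(cc j:ℝ)| ≤ ε/2 := by
              rw [div_le_iff₀ hcj0]
              calc |∑ j', (cc j':ℝ) * (x j' - q' j')| ≤ C * ε' := hbound
                _ ≤ ε / 2 * |(cc j:ℝ)| := h2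
            calc |x j - (q j : ℝ)| = |(x j - q' j) - (∑ j', (cc j':ℝ) * (x j' - q' j')) / (cc j : ℝ)| := by
                  rw [hqj, key]
              _ ≤ |x j - q' j| + |(∑ j', (cc j':ℝ) * (x j' - q' j')) / (cc j : ℝ)| := by
                  rw [sub_eq_add_neg]
                  refine (abs_add_le _ _).trans ?_
                  rw [abs_neg]
              _ = |x j - q' j| + |∑ j', (cc j':ℝ) * (x j' - q' j')| / |(cc j : ℝ)| := by
                  rw [abs_div]
              _ < ε' + ε/2 := add_lt_add_of_lt_of_le (hq'2 j) h3
              _ ≤ ε := by linarith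
          · rw [hqdef]
            rw [Function.update_of_ne hj]
            exact lt_of_lt_of_le (hq'2 j) (le_trans hε'le (by linarith))

open Metric in
lemma exists_fine_partition {Y : Type*} [MetricSpace Y] [MeasurableSpace Y]
    [OpensMeasurableSpace Y] {K : Set Y} (hK : IsCompact K) {δ : ℝ} (hδ : 0 < δ) :
    ∃ (n : ℕ) (cell : Fin n → Set Y),
      (∀ m, MeasurableSet (cell m)) ∧ (∀ m, cell m ⊆ K) ∧
      (∀ m, ∀ x ∈ cell m, ∀ y ∈ cell m, dist x y < δ) ∧
      (∀ x ∈ K, ∃ m, x ∈ cell m) ∧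
      (∀ m m', m ≠ m' → Disjoint (cell m) (cell m')) := by
  classical
  have hcover : K ⊆ ⋃ y : Y, ball y (δ/3) := fun x _ =>
    Set.mem_iUnion.2 ⟨x, mem_ball_self (by linarith)⟩
  obtain ⟨t, ht⟩ := hK.elim_finite_subcover (fun y : Y => ball y (δ/3))
    (fun _ => isOpen_ball) hcover
  refine ⟨t.card, fun m => (K ∩ ball (t.equivFin.symm m : Y) (δ/3)) \
      ⋃ (l : Fin t.card) (_ : l < m), ball (t.equivFin.symm l : Y) (δ/3), ?_, ?_, ?_, ?_, ?_⟩
  · intro m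
    refine MeasurableSet.diff ((hK.isClosed.measurableSet).inter measurableSet_ball) ?_
    exact MeasurableSet.iUnion fun l => MeasurableSet.iUnion fun _ => measurableSet_ball
  · intro m x hx
    exact hx.1.1
  · intro m x hx y hy
    have hx' := hx.1.2
    have hy' := hy.1.2
    calc dist x y ≤ dist x (t.equivFin.symm m : Y) + dist (t.equivFin.symm m : Y) y := dist_triangle _ _ _
      _ < δ/3 + δ/3 := by
          apply add_lt_add (mem_ball.1 hx')
          rw [dist_comm]; exact mem_ball.1 hy'
      _ < δ := by linarith
  · intro x hx
    have : ∃ m : Fin t.card, x ∈ ball (t.equivFin.symm m : Y) (δ/3) := by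
      have := ht hx
      rw [Set.mem_iUnion₂] at this
      obtain ⟨y, hy, hxy⟩ := this
      exact ⟨t.equivFin ⟨y, hy⟩, by simpa using hxy⟩
    classical
    obtain ⟨m, hm⟩ := this
    let S : Finset (Fin t.card) := Finset.univ.filter
      (fun l => x ∈ ball (t.equivFin.symm l : Y) (δ/3))
    have hSne : S.Nonempty := ⟨m, by simp only [S, Finset.mem_filter, Finset.mem_univ, true_and]; exact hm⟩
    refine ⟨S.min' hSne, ⟨hx, ?_⟩, ?_⟩
    · have := S.min'_mem hSne
      simp only [S, Finset.mem_filter] at this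
      exact this.2
    · rw [Set.mem_iUnion₂]
      rintro ⟨l, hl, hxl⟩
      have hlS : l ∈ S := by simp only [S, Finset.mem_filter, Finset.mem_univ, true_and]; exact hxl
      exact absurd (S.min'_le l hlS) (not_le.2 hl)
  · intro m m' hmm'
    rw [Set.disjoint_left]
    rintro z ⟨⟨_, hzb⟩, hzU⟩ ⟨⟨_, hzb'⟩, hzU'⟩
    rcases lt_or_gt_of_ne hmm' with h | h
    · exact hzU' (Set.mem_iUnion₂.2 ⟨m, h, hzb⟩)
    · exact hzU (Set.mem_iUnion₂.2 ⟨m', h, hzb'⟩)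

open Finset in
lemma exists_matching_equiv {ι : Type*} [Fintype ι] [DecidableEq ι] {κ : Type*} [DecidableEq κ]
    (w₁ w₂ : ι → ℕ) (g : ι → κ)
    (h : ∀ m : κ, ∑ f ∈ Finset.univ.filter (fun f => g f = m), w₁ f
        = ∑ f ∈ Finset.univ.filter (fun f => g f = m), w₂ f) :
    ∃ τ : (Σ f : ι, Fin (w₂ f)) ≃ (Σ f : ι, Fin (w₁ f)), ∀ x, g (τ x).1 = g x.1 := by
  classical
  have hcard : ∀ (w : ι → ℕ) (m : κ),
      Fintype.card {x : Σ f : ι, Fin (w f) // g x.1 = m}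
        = ∑ f ∈ Finset.univ.filter (fun f => g f = m), w f := by
    intro w m
    rw [Fintype.card_congr (Equiv.subtypeSigmaEquiv (fun f : ι => Fin (w f)) (fun f => g f = m))]
    rw [Fintype.card_sigma]
    simp only [Fintype.card_fin]
    exact (Finset.sum_subtype _ (fun x => by simp) w).symm
  refine ⟨Equiv.ofFiberEquiv (f := fun x : Σ f : ι, Fin (w₂ f) => g x.1)
    (g := fun y : Σ f : ι, Fin (w₁ f) => g y.1)
    (fun m => Fintype.equivOfCardEq (by rw [hcard w₂ m, hcard w₁ m, h])), ?_⟩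
  intro x
  exact Equiv.ofFiberEquiv_map (f := fun x : Σ f : ι, Fin (w₂ f) => g x.1)
    (g := fun y : Σ f : ι, Fin (w₁ f) => g y.1) _ x

lemma meas_pi_one {δ' : Type*} [Fintype δ'] {X : δ' → Type*} [∀ i, MeasurableSpace (X i)]
    (ν : Measure (∀ i, X i)) [IsProbabilityMeasure ν] (S : ∀ i, Set (X i))
    (hm : ∀ i, MeasurableSet (S i)) (h1 : ∀ i, ν ((fun x => x i) ⁻¹' S i) = 1) :
    ν (Set.univ.pi S) = 1 := by
  have hpi : Set.univ.pi S = ⋂ i, (fun x => x i) ⁻¹' S i := by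
    ext x; simp [Set.mem_pi]
  rw [hpi]
  rw [← prob_compl_eq_zero_iff (MeasurableSet.iInter fun i =>
    (hm i).preimage (measurable_pi_apply i))]
  rw [Set.compl_iInter]
  refine le_antisymm (le_trans (measure_iUnion_le _) ?_) zero_le
  have : ∀ i, ν (((fun x : ∀ j, X j => x i) ⁻¹' S i)ᶜ) = 0 := by
    intro i
    rw [measure_compl ((hm i).preimage (measurable_pi_apply i)) (measure_ne_top _ _), h1 i]
    simp
  simp [this]

theorem main_thm
    {N : ℕ} {X : Fin (N + 1) → Type*}
    [∀ i, TopologicalSpace (X i)] [∀ i, PolishSpace (X i)]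
    [∀ i, MeasurableSpace (X i)] [∀ i, BorelSpace (X i)]
    (μ : ∀ i, Measure (X i)) [∀ i, IsProbabilityMeasure (μ i)]
    (hcompact : ∀ i, ∃ K : Set (X i), IsCompact K ∧ μ i K = 1)
    (c : (∀ i, X i) → EReal) (hc : Continuous c)
    (γ : Measure (∀ i, X i))
    (hγ : ∀ i, γ.map (fun x => x i) = μ i)
    (hmono : ∃ Γ : Set (∀ i, X i), InfinitelyCCyclicallyMonotone c Γ ∧ γ Γ = 1) :
    ∀ γ' : Measure (∀ i, X i), (∀ i, γ'.map (fun x => x i) = μ i) →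
      essSup c γ ≤ essSup c γ' := by
  classical
  intro γ' hγ'
  by_contra hltc
  push_neg at hltc
  obtain ⟨Γ, hicm, hΓ1⟩ := hmono
  have hproj : ∀ i, Measurable (fun x : ∀ j, X j => x i) := fun i => measurable_pi_apply i
  have huniv : ∀ (ν : Measure (∀ j, X j)), (∀ i, ν.map (fun x => x i) = μ i) →
      ν Set.univ = 1 := by
    intro ν hν
    have h2 : (ν.map (fun x => x 0)) Set.univ = 1 := by
      rw [hν 0]; exact measure_univ
    rwa [Measure.map_apply (hproj 0) MeasurableSet.univ, Set.preimage_univ] at h2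
  haveI : IsProbabilityMeasure γ := ⟨huniv γ hγ⟩
  haveI : IsProbabilityMeasure γ' := ⟨huniv γ' hγ'⟩
  have hcm : Measurable c := hc.measurable
  -- levels s < t strictly between the two essSups
  obtain ⟨s, hs1, hs2⟩ := exists_between hltc
  obtain ⟨t, ht1, ht2⟩ := exists_between hs2
  have haes : ∀ᵐ x ∂γ', c x < s := ae_lt_of_essSup_lt hs1
  have hγt : γ {x | t < c x} ≠ 0 := by
    intro h0
    have hae : ∀ᵐ x ∂γ, c x ≤ t := by
      rw [MeasureTheory.ae_iff]
      simpa only [not_le] using h0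
    exact absurd (essSup_le_of_ae_le t hae) (not_le.2 ht2)
  -- compact sets
  choose K hKc hK1 using hcompact
  have hKm : ∀ i, MeasurableSet (K i) := fun i => (hKc i).isClosed.measurableSet
  have hmeas1 : ∀ (ν : Measure (∀ j, X j)) (_ : IsProbabilityMeasure ν),
      (∀ i, ν.map (fun x => x i) = μ i) → ν (Set.univ.pi K) = 1 := by
    intro ν hin hν
    refine meas_pi_one ν K hKm ?_
    intro i
    rw [← Measure.map_apply (hproj i) (hKm i), hν i]
    exact hK1 i
  have hγK : γ (Set.univ.pi K) = 1 := hmeas1 γ ‹_› hγ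
  have hγ'K : γ' (Set.univ.pi K) = 1 := hmeas1 γ' ‹_› hγ'
  set Kp := Set.univ.pi K with hKp
  have hKpc : IsCompact Kp := isCompact_univ_pi hKc
  have hKpm : MeasurableSet Kp := MeasurableSet.univ_pi hKm
  -- upgrade to metric spaces
  letI : ∀ i, TopologicalSpace.UpgradedIsCompletelyMetrizableSpace (X i) := fun i => TopologicalSpace.upgradeIsCompletelyMetrizable (X i)
  -- the separation constant δ
  set C1 : Set (∀ j, X j) := Kp ∩ c ⁻¹' (Set.Iic s) with hC1
  set C2 : Set (∀ j, X j) := Kp ∩ c ⁻¹' (Set.Ici t) with hC2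
  have hC1c : IsCompact C1 := hKpc.inter_right (isClosed_Iic.preimage hc)
  have hC2c : IsCompact C2 := hKpc.inter_right (isClosed_Ici.preimage hc)
  have hC2ne : C2.Nonempty := by
    have h0 : γ ({x | t < c x} ∩ Kp) ≠ 0 := by
      intro h0
      apply hγt
      have h1 : γ {x | t < c x} ≤ γ ({x | t < c x} ∩ Kp) + γ Kpᶜ := by
        refine le_trans (measure_mono ?_) (measure_union_le _ _)
        intro x hx
        by_cases hxK : x ∈ Kp
        · exact Or.inl ⟨hx, hxK⟩
        · exact Or.inr hxK
      rw [h0, measure_compl hKpm (measure_ne_top _ _), hγK] at h1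
      simpa using h1
    obtain ⟨x, hx⟩ := nonempty_of_measure_ne_zero h0
    exact ⟨x, hx.2, Set.mem_preimage.2 (Set.mem_Ici.2 (le_of_lt hx.1))⟩
  have hC1ne : C1.Nonempty := by
    have h0 : γ' (Kp ∩ {x | c x < s}) ≠ 0 := by
      intro h0
      have h1 : γ' Kp ≤ γ' (Kp ∩ {x | c x < s}) + γ' {x | ¬ c x < s} := by
        refine le_trans (measure_mono ?_) (measure_union_le _ _)
        intro x hx
        by_cases hxs : c x < s
        · exact Or.inl ⟨hx, hxs⟩
        · exact Or.inr hxs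
      rw [h0, hγ'K, MeasureTheory.ae_iff.1 haes] at h1
      simpa using h1
    obtain ⟨x, hx⟩ := nonempty_of_measure_ne_zero h0
    exact ⟨x, hx.1, Set.mem_preimage.2 (Set.mem_Iic.2 (le_of_lt hx.2))⟩
  obtain ⟨δ, hδpos, hδsep⟩ : ∃ δ : ℝ, 0 < δ ∧ ∀ v ∈ C1, ∀ u ∈ Kp,
      (∀ j, dist (u j) (v j) < δ) → c u < t := by
    obtain ⟨v0, hv0C, hv0min⟩ := hC1c.exists_isMinOn hC1ne
      ((Metric.continuous_infDist_pt C2).continuousOn)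
    have hpos : 0 < Metric.infDist v0 C2 := by
      rcases eq_or_lt_of_le (Metric.infDist_nonneg (s := C2) (x := v0)) with h0 | h
      · exfalso
        obtain ⟨u0, hu0, hd⟩ := hC2c.exists_infDist_eq_dist hC2ne v0
        rw [← h0] at hd
        have hveq : v0 = u0 := dist_eq_zero.1 hd.symm
        rw [hveq] at hv0C
        have h1 : c u0 ≤ s := hv0C.2
        have h2 : t ≤ c u0 := hu0.2
        exact absurd (lt_of_le_of_lt (le_trans h2 h1) ht1) (lt_irrefl _)
      · exact h
    refine ⟨Metric.infDist v0 C2, hpos, ?_⟩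
    intro v hv u hu hclose
    by_contra hcu
    push_neg at hcu
    have huC2 : u ∈ C2 := ⟨hu, Set.mem_preimage.2 hcu⟩
    have h1 : Metric.infDist v0 C2 ≤ Metric.infDist v C2 := hv0min hv
    have h2 : Metric.infDist v C2 ≤ dist v u := Metric.infDist_le_dist_of_mem huC2
    have h3 : dist u v < Metric.infDist v0 C2 := (dist_pi_lt_iff hpos).2 hclose
    rw [dist_comm] at h3
    exact absurd (lt_of_le_of_lt (le_trans h1 h2) h3) (lt_irrefl _)
  -- partitions of each K i
  have hpart := fun i => exists_fine_partition (Y := X i) (hKc i) hδpos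
  choose n cell hcellm hcellK hcelldiam hcellcover hcelldisj using hpart
  set Cell : (∀ i, Fin (n i)) → Set (∀ j, X j) :=
    fun f => {x | ∀ i, x i ∈ cell i (f i)} with hCell
  have hCellm : ∀ f, MeasurableSet (Cell f) := by
    intro f
    have hEq : Cell f = ⋂ i, (fun x : ∀ j, X j => x i) ⁻¹' (cell i (f i)) := by
      ext x; simp [hCell, Set.mem_iInter]
    rw [hEq]
    exact MeasurableSet.iInter fun i => (hcellm i (f i)).preimage (hproj i)
  have hCellK : ∀ f, Cell f ⊆ Kp := by
    intro f x hx
    rw [hKp, Set.mem_univ_pi]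
    intro i; exact hcellK i (f i) (hx i)
  have hCelldisj : ∀ f g : (∀ i, Fin (n i)), f ≠ g → Disjoint (Cell f) (Cell g) := by
    intro f g hfg
    obtain ⟨i, hi⟩ := Function.ne_iff.1 hfg
    rw [Set.disjoint_left]
    intro x hxf hxg
    exact Set.disjoint_left.1 (hcelldisj i (f i) (g i) hi) (hxf i) (hxg i)
  have hCellcover : ∀ x ∈ Kp, ∃ f : (∀ i, Fin (n i)), x ∈ Cell f := by
    intro x hx
    have hex : ∀ i, ∃ m, x i ∈ cell i m := fun i => hcellcover i (x i) (hx i (Set.mem_univ i))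
    choose g hg using hex
    exact ⟨g, hg⟩
  have hmargU : ∀ (i : Fin (N+1)) (m : Fin (n i)),
      (⋃ f ∈ Finset.univ.filter (fun f : ∀ i, Fin (n i) => f i = m), Cell f)
        = Kp ∩ (fun x => x i) ⁻¹' (cell i m) := by
    intro i m
    ext x
    constructor
    · intro hx
      rw [Set.mem_iUnion₂] at hx
      obtain ⟨f, hf, hxf⟩ := hx
      have hfi : f i = m := (Finset.mem_filter.1 hf).2
      exact ⟨hCellK f hxf, by rw [Set.mem_preimage, ← hfi]; exact hxf i⟩
    · rintro ⟨hxK, hxm⟩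
      obtain ⟨f, hf⟩ := hCellcover x hxK
      have hfi : f i = m := by
        by_contra hne
        exact Set.disjoint_left.1 (hcelldisj i (f i) m hne) (hf i) hxm
      rw [Set.mem_iUnion₂]
      exact ⟨f, Finset.mem_filter.2 ⟨Finset.mem_univ f, hfi⟩, hf⟩
  have hinterK : ∀ (ν : Measure (∀ j, X j)), ν Kp = 1 → ν Set.univ = 1 →
      ∀ (S : Set (∀ j, X j)), MeasurableSet S → ν (Kp ∩ S) = ν S := by
    intro ν hνK hνu S hS
    refine le_antisymm (measure_mono Set.inter_subset_right) ?_
    have h1 : ν S ≤ ν (Kp ∩ S) + ν Kpᶜ := by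
      refine le_trans (measure_mono ?_) (measure_union_le _ _)
      intro x hx
      by_cases hxK : x ∈ Kp
      · exact Or.inl ⟨hxK, hx⟩
      · exact Or.inr hxK
    have h2 : ν Kpᶜ = 0 := by
      rw [measure_compl hKpm (by rw [hνK]; exact ENNReal.one_ne_top), hνK, hνu]
      simp
    rw [h2, add_zero] at h1
    exact h1
  have hmarg : ∀ (ν : Measure (∀ j, X j)), (∀ i, ν.map (fun x => x i) = μ i) →
      ν Kp = 1 → ∀ (i : Fin (N+1)) (m : Fin (n i)),
      ∑ f ∈ Finset.univ.filter (fun f : ∀ i, Fin (n i) => f i = m), ν (Cell f)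
        = μ i (cell i m) := by
    intro ν hν hνK i m
    have hpd : Set.PairwiseDisjoint
        ↑(Finset.univ.filter (fun f : ∀ i, Fin (n i) => f i = m)) Cell := by
      intro a _ b _ hab
      exact hCelldisj a b hab
    rw [← measure_biUnion_finset hpd (fun f _ => hCellm f), hmargU i m,
      hinterK ν hνK (huniv ν hν) _ ((hcellm i m).preimage (hproj i)),
      ← Measure.map_apply (hproj i) (hcellm i m), hν i]
  have hTK : γ ({x | t < c x} ∩ Kp) ≠ 0 := by
    intro h0
    apply hγt
    have h1 : γ {x | t < c x} ≤ γ ({x | t < c x} ∩ Kp) + γ Kpᶜ := by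
      refine le_trans (measure_mono ?_) (measure_union_le _ _)
      intro x hx
      by_cases hxK : x ∈ Kp
      · exact Or.inl ⟨hx, hxK⟩
      · exact Or.inr hxK
    have h2 : γ Kpᶜ = 0 := by
      rw [measure_compl hKpm (by rw [hγK]; exact ENNReal.one_ne_top), hγK, measure_univ]
      simp
    rw [h0, h2, add_zero] at h1
    exact le_antisymm h1 zero_le
  obtain ⟨fb, hfb⟩ : ∃ fb : ∀ i, Fin (n i), γ (Cell fb ∩ {x | t < c x}) ≠ 0 := by
    by_contra hall
    push_neg at hall
    apply hTK
    have hsub : {x | t < c x} ∩ Kp ⊆ ⋃ f ∈ (Finset.univ : Finset (∀ i, Fin (n i))),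
        (Cell f ∩ {x | t < c x}) := by
      rintro x ⟨hxc, hxK⟩
      obtain ⟨f, hf⟩ := hCellcover x hxK
      exact Set.mem_biUnion (Finset.mem_univ f) ⟨hf, hxc⟩
    refine le_antisymm (le_trans (measure_mono hsub) ?_) zero_le
    refine le_trans (measure_biUnion_finset_le _ _) ?_
    simp [hall]
  have hmeet : ∀ S : Set (∀ j, X j), MeasurableSet S → γ S ≠ 0 → (S ∩ Γ).Nonempty := by
    intro S hS h0
    rw [Set.nonempty_iff_ne_empty]
    intro hem
    have hsub : Γ ⊆ Sᶜ := by
      intro y hy hyS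
      exact Set.eq_empty_iff_forall_notMem.1 hem y ⟨hyS, hy⟩
    have hle := measure_mono (μ := γ) hsub
    rw [hΓ1, measure_compl hS (measure_ne_top _ _), measure_univ] at hle
    apply h0
    by_contra hS0
    have hlt : 1 - γ S < 1 := ENNReal.sub_lt_self ENNReal.one_ne_top one_ne_zero hS0
    exact absurd (lt_of_le_of_lt hle hlt) (lt_irrefl _)
  have hctm : MeasurableSet {x : ∀ j, X j | t < c x} :=
    measurableSet_lt measurable_const hcm
  obtain ⟨xb, hxbmem, hxbΓ⟩ : ∃ xb, (xb ∈ Cell fb ∩ {x | t < c x}) ∧ xb ∈ Γ := by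
    obtain ⟨xb, h1, h2⟩ := hmeet _ ((hCellm fb).inter hctm) hfb
    exact ⟨xb, h1, h2⟩
  have hxbCell : xb ∈ Cell fb := hxbmem.1
  have hxbc : t < c xb := hxbmem.2
  have hγfb : γ (Cell fb) ≠ 0 := by
    intro h0
    exact hfb (le_antisymm (le_trans (measure_mono Set.inter_subset_left) (le_of_eq h0))
      zero_le)
  -- choose representative points
  have hΓpt : ∀ f, γ (Cell f) ≠ 0 → ∃ x, x ∈ Γ ∧ x ∈ Cell f := by
    intro f h0
    obtain ⟨x, hx1, hx2⟩ := hmeet _ (hCellm f) h0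
    exact ⟨x, hx2, hx1⟩
  have hvpt : ∀ f, γ' (Cell f) ≠ 0 → ∃ x, x ∈ Cell f ∧ c x < s := by
    intro f h0
    have h1 : γ' (Cell f ∩ {x | c x < s}) ≠ 0 := by
      intro hz
      apply h0
      have hb : γ' (Cell f) ≤ γ' (Cell f ∩ {x | c x < s}) + γ' {x | ¬ c x < s} := by
        refine le_trans (measure_mono ?_) (measure_union_le _ _)
        intro x hx
        by_cases hxs : c x < s
        · exact Or.inl ⟨hx, hxs⟩
        · exact Or.inr hxs
      rw [hz, MeasureTheory.ae_iff.1 haes, add_zero] at hb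
      exact le_antisymm hb zero_le
    obtain ⟨x, hx⟩ := nonempty_of_measure_ne_zero h1
    exact ⟨x, hx.1, hx.2⟩
  have hupt : ∀ f : ∀ i, Fin (n i), ∃ x, γ (Cell f) ≠ 0 → (x ∈ Γ ∧ x ∈ Cell f) := by
    intro f
    by_cases h : γ (Cell f) ≠ 0
    · obtain ⟨x, hx⟩ := hΓpt f h; exact ⟨x, fun _ => hx⟩
    · exact ⟨xb, fun hh => absurd hh h⟩
  choose u hu using hupt
  have hvpt' : ∀ f : ∀ i, Fin (n i), ∃ x, γ' (Cell f) ≠ 0 → (x ∈ Cell f ∧ c x < s) := by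
    intro f
    by_cases h : γ' (Cell f) ≠ 0
    · obtain ⟨x, hx⟩ := hvpt f h; exact ⟨x, fun _ => hx⟩
    · exact ⟨xb, fun hh => absurd hh h⟩
  choose v hv using hvpt'
  -- the rational approximation setup
  have hmargR : ∀ (i) (m : Fin (n i)),
      ∑ f ∈ Finset.univ.filter (fun f : ∀ i, Fin (n i) => f i = m), (γ (Cell f)).toReal
      = ∑ f ∈ Finset.univ.filter (fun f : ∀ i, Fin (n i) => f i = m), (γ' (Cell f)).toReal := by
    intro i m
    rw [← ENNReal.toReal_sum (fun f _ => measure_ne_top _ _),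
        ← ENNReal.toReal_sum (fun f _ => measure_ne_top _ _),
        hmarg γ hγ hγK i m, hmarg γ' hγ' hγ'K i m]
  set xval : ((∀ i, Fin (n i)) ⊕ (∀ i, Fin (n i))) → ℝ :=
    Sum.elim (fun f => (γ (Cell f)).toReal) (fun f => (γ' (Cell f)).toReal) with hxval
  set margRow : (Σ i : Fin (N+1), Fin (n i)) → (((∀ i, Fin (n i)) ⊕ (∀ i, Fin (n i))) → ℚ) :=
    fun im => Sum.elim (fun f => if f im.1 = im.2 then 1 else 0)
      (fun f => if f im.1 = im.2 then -1 else 0) with hmargRow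
  set suppRowA : (∀ i, Fin (n i)) → (((∀ i, Fin (n i)) ⊕ (∀ i, Fin (n i))) → ℚ) :=
    fun f => if γ (Cell f) = 0 then (fun j => if j = Sum.inl f then 1 else 0) else 0
    with hsuppRowA
  set suppRowB : (∀ i, Fin (n i)) → (((∀ i, Fin (n i)) ⊕ (∀ i, Fin (n i))) → ℚ) :=
    fun f => if γ' (Cell f) = 0 then (fun j => if j = Sum.inr f then 1 else 0) else 0
    with hsuppRowB
  set L : List (((∀ i, Fin (n i)) ⊕ (∀ i, Fin (n i))) → ℚ) :=
    ((Finset.univ : Finset (Σ i : Fin (N+1), Fin (n i))).toList.map margRow)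
    ++ ((Finset.univ : Finset (∀ i, Fin (n i))).toList.map suppRowA)
    ++ ((Finset.univ : Finset (∀ i, Fin (n i))).toList.map suppRowB) with hL
  have hxsol : ∀ d ∈ L, ∑ j, (d j : ℝ) * xval j = 0 := by
    intro d hd
    rw [hL, List.append_assoc, List.mem_append, List.mem_append] at hd
    rcases hd with hd | hd | hd
    · rw [List.mem_map] at hd
      obtain ⟨w, _, rfl⟩ := hd
      obtain ⟨i, m⟩ := w
      rw [Fintype.sum_sum_type]
      have e1 : ∑ f : ∀ i, Fin (n i), ((margRow ⟨i, m⟩ (Sum.inl f) : ℚ) : ℝ) * xval (Sum.inl f)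
          = ∑ f ∈ Finset.univ.filter (fun f : ∀ i, Fin (n i) => f i = m),
              (γ (Cell f)).toReal := by
        rw [Finset.sum_filter]
        apply Finset.sum_congr rfl
        intro f _
        by_cases hfi : f i = m
        · simp [hmargRow, hxval, hfi]
        · simp [hmargRow, hxval, hfi]
      have e2 : ∑ f : ∀ i, Fin (n i), ((margRow ⟨i, m⟩ (Sum.inr f) : ℚ) : ℝ) * xval (Sum.inr f)
          = -∑ f ∈ Finset.univ.filter (fun f : ∀ i, Fin (n i) => f i = m),
              (γ' (Cell f)).toReal := by
        rw [← Finset.sum_neg_distrib, Finset.sum_filter]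
        apply Finset.sum_congr rfl
        intro f _
        by_cases hfi : f i = m
        · simp [hmargRow, hxval, hfi]
        · simp [hmargRow, hxval, hfi]
      rw [e1, e2, hmargR i m]
      ring
    · rw [List.mem_map] at hd
      obtain ⟨f, _, rfl⟩ := hd
      by_cases hf0 : γ (Cell f) = 0
      · have hrow : ∀ j, suppRowA f j = if j = Sum.inl f then 1 else 0 := by
          intro j; rw [hsuppRowA]; simp [hf0]
        have hsum : ∑ j, ((suppRowA f j : ℚ) : ℝ) * xval j = xval (Sum.inl f) := by
          rw [Finset.sum_congr rfl (fun j _ => by rw [hrow j])]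
          rw [Finset.sum_eq_single (Sum.inl f)]
          · simp
          · intro b _ hb; simp [hb]
          · intro hb; exact absurd (Finset.mem_univ _) hb
        rw [hsum]
        simp [hxval, hf0]
      · have hrow : suppRowA f = 0 := by rw [hsuppRowA]; simp [hf0]
        simp [hrow]
    · rw [List.mem_map] at hd
      obtain ⟨f, _, rfl⟩ := hd
      by_cases hf0 : γ' (Cell f) = 0
      · have hrow : ∀ j, suppRowB f j = if j = Sum.inr f then 1 else 0 := by
          intro j; rw [hsuppRowB]; simp [hf0]
        have hsum : ∑ j, ((suppRowB f j : ℚ) : ℝ) * xval j = xval (Sum.inr f) := by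
          rw [Finset.sum_congr rfl (fun j _ => by rw [hrow j])]
          rw [Finset.sum_eq_single (Sum.inr f)]
          · simp
          · intro b _ hb; simp [hb]
          · intro hb; exact absurd (Finset.mem_univ _) hb
        rw [hsum]
        simp [hxval, hf0]
      · have hrow : suppRowB f = 0 := by rw [hsuppRowB]; simp [hf0]
        simp [hrow]
  -- apply rational approximation
  haveI hne1 : ∀ i, Nonempty (Fin (n i)) := by
    intro i
    have hKne : (K i).Nonempty := nonempty_of_measure_ne_zero (by
      rw [hK1 i]; exact one_ne_zero)
    obtain ⟨y, hy⟩ := hKne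
    obtain ⟨m, _⟩ := hcellcover i y hy
    exact ⟨m⟩
  have hxnn : ∀ j, 0 ≤ xval j := by
    intro j
    cases j with
    | inl f => simp only [hxval, Sum.elim_inl]; exact ENNReal.toReal_nonneg
    | inr f => simp only [hxval, Sum.elim_inr]; exact ENNReal.toReal_nonneg
  set εf : ((∀ i, Fin (n i)) ⊕ (∀ i, Fin (n i))) → ℝ :=
    fun j => if xval j = 0 then 1 else xval j with hεf
  have hεfpos : ∀ j, 0 < εf j := by
    intro j
    rw [hεf]
    by_cases h : xval j = 0
    · simp [h]
    · simp only [h, if_false]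
      exact lt_of_le_of_ne (hxnn j) (Ne.symm h)
  have hεfle : ∀ j, xval j ≠ 0 → εf j ≤ xval j := by
    intro j h; rw [hεf]; simp [h]
  set εmin : ℝ := Finset.univ.inf' Finset.univ_nonempty εf with hεmin
  have hεminpos : 0 < εmin := by
    rw [hεmin]
    rw [Finset.lt_inf'_iff]
    intro j _
    exact hεfpos j
  obtain ⟨q, hq1, hq2⟩ := rat_approx L.length L rfl xval hxsol εmin hεminpos
  -- extraction of nonnegative rational solution
  have hqA0 : ∀ f, γ (Cell f) = 0 → q (Sum.inl f) = 0 := by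
    intro f h0
    have hmem : suppRowA f ∈ L := by
      rw [hL, List.append_assoc]
      exact List.mem_append_right _ (List.mem_append_left _
        (List.mem_map_of_mem (f := suppRowA) (Finset.mem_toList.2 (Finset.mem_univ f))))
    have hs0 := hq1 _ hmem
    have hrow : ∀ j, suppRowA f j = if j = Sum.inl f then 1 else 0 := by
      intro j; rw [hsuppRowA]; simp [h0]
    rw [Finset.sum_congr rfl (fun j _ => by rw [hrow j])] at hs0
    rw [Finset.sum_eq_single (Sum.inl f)] at hs0
    · simpa using hs0
    · intro b _ hb; simp [hb]
    · intro hb; exact absurd (Finset.mem_univ _) hb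
  have hqB0 : ∀ f, γ' (Cell f) = 0 → q (Sum.inr f) = 0 := by
    intro f h0
    have hmem : suppRowB f ∈ L := by
      rw [hL, List.append_assoc]
      exact List.mem_append_right _ (List.mem_append_right _
        (List.mem_map_of_mem (f := suppRowB) (Finset.mem_toList.2 (Finset.mem_univ f))))
    have hs0 := hq1 _ hmem
    have hrow : ∀ j, suppRowB f j = if j = Sum.inr f then 1 else 0 := by
      intro j; rw [hsuppRowB]; simp [h0]
    rw [Finset.sum_congr rfl (fun j _ => by rw [hrow j])] at hs0
    rw [Finset.sum_eq_single (Sum.inr f)] at hs0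
    · simpa using hs0
    · intro b _ hb; simp [hb]
    · intro hb; exact absurd (Finset.mem_univ _) hb
  have hqpos : ∀ j, xval j ≠ 0 → 0 < q j := by
    intro j h0
    have h1 : εmin ≤ εf j := Finset.inf'_le εf (Finset.mem_univ j)
    have h2 := hq2 j
    have h3 := (abs_lt.1 h2).2
    have h4 : εf j ≤ xval j := hεfle j h0
    have : (0:ℝ) < (q j : ℝ) := by linarith
    exact_mod_cast this
  have hqAnn : ∀ f, 0 ≤ q (Sum.inl f) := by
    intro f
    by_cases h : γ (Cell f) = 0
    · rw [hqA0 f h]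
    · refine le_of_lt (hqpos (Sum.inl f) ?_)
      simp only [hxval, Sum.elim_inl]
      exact fun hr => h (by
        have := ENNReal.toReal_eq_zero_iff _ |>.1 hr
        rcases this with h' | h'
        · exact h'
        · exact absurd h' (measure_ne_top _ _))
  have hqBnn : ∀ f, 0 ≤ q (Sum.inr f) := by
    intro f
    by_cases h : γ' (Cell f) = 0
    · rw [hqB0 f h]
    · refine le_of_lt (hqpos (Sum.inr f) ?_)
      simp only [hxval, Sum.elim_inr]
      exact fun hr => h (by
        have := ENNReal.toReal_eq_zero_iff _ |>.1 hr
        rcases this with h' | h'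
        · exact h'
        · exact absurd h' (measure_ne_top _ _))
  -- integer weights
  set D : ℕ := ∏ j : ((∀ i, Fin (n i)) ⊕ (∀ i, Fin (n i))), (q j).den with hDdef
  have hDdvd : ∀ j, (q j).den ∣ D := fun j => Finset.dvd_prod_of_mem _ (Finset.mem_univ j)
  have hDpos : 0 < D := Finset.prod_pos (fun j _ => (q j).pos)
  have hqcast : ∀ r : ℚ, 0 ≤ r → r.den ∣ D → ((r.num.toNat * (D / r.den) : ℕ) : ℚ) = r * D := by
    intro r hr hdvd
    have h0 : ((r.num.toNat * (D / r.den) : ℕ) : ℚ)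
        = (r.num : ℚ) * ((D / r.den : ℕ) : ℚ) := by
      rw [Nat.cast_mul]
      congr 1
      rw [← Int.cast_natCast (R := ℚ), Int.toNat_of_nonneg (Rat.num_nonneg.2 hr)]
    have h2 : (D:ℚ) = (r.den : ℚ) * ((D / r.den : ℕ) : ℚ) := by
      rw [← Nat.cast_mul, Nat.mul_div_cancel' hdvd]
    have h1 : (r.num : ℚ) = r * r.den := by
      have hden : ((r.den : ℚ)) ≠ 0 := by
        have := r.den_nz
        exact_mod_cast this
      exact (div_eq_iff hden).1 (Rat.num_div_den r)
    rw [h0, h1, h2]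
    ring
  set wA : (∀ i, Fin (n i)) → ℕ :=
    fun f => (q (Sum.inl f)).num.toNat * (D / (q (Sum.inl f)).den) with hwA
  set wB : (∀ i, Fin (n i)) → ℕ :=
    fun f => (q (Sum.inr f)).num.toNat * (D / (q (Sum.inr f)).den) with hwB
  have hwAcast : ∀ f, ((wA f : ℚ)) = q (Sum.inl f) * D :=
    fun f => hqcast _ (hqAnn f) (hDdvd _)
  have hwBcast : ∀ f, ((wB f : ℚ)) = q (Sum.inr f) * D :=
    fun f => hqcast _ (hqBnn f) (hDdvd _)
  have hQmarg : ∀ (i : Fin (N+1)) (m : Fin (n i)),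
      ∑ f ∈ Finset.univ.filter (fun f : ∀ i, Fin (n i) => f i = m), q (Sum.inl f)
      = ∑ f ∈ Finset.univ.filter (fun f : ∀ i, Fin (n i) => f i = m), q (Sum.inr f) := by
    intro i m
    have hmem : margRow ⟨i, m⟩ ∈ L := by
      rw [hL, List.append_assoc]
      exact List.mem_append_left _
        (List.mem_map_of_mem (f := margRow) (Finset.mem_toList.2 (Finset.mem_univ _)))
    have h0 := hq1 _ hmem
    rw [Fintype.sum_sum_type] at h0
    have e1 : ∑ f : ∀ i, Fin (n i), margRow ⟨i, m⟩ (Sum.inl f) * q (Sum.inl f)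
        = ∑ f ∈ Finset.univ.filter (fun f : ∀ i, Fin (n i) => f i = m), q (Sum.inl f) := by
      rw [Finset.sum_filter]
      apply Finset.sum_congr rfl
      intro f _
      by_cases hfi : f i = m
      · simp [hmargRow, hfi]
      · simp [hmargRow, hfi]
    have e2 : ∑ f : ∀ i, Fin (n i), margRow ⟨i, m⟩ (Sum.inr f) * q (Sum.inr f)
        = -∑ f ∈ Finset.univ.filter (fun f : ∀ i, Fin (n i) => f i = m), q (Sum.inr f) := by
      rw [← Finset.sum_neg_distrib, Finset.sum_filter]
      apply Finset.sum_congr rfl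
      intro f _
      by_cases hfi : f i = m
      · simp [hmargRow, hfi]
      · simp [hmargRow, hfi]
    rw [e1, e2] at h0
    linarith
  have hWmarg : ∀ (i : Fin (N+1)) (m : Fin (n i)),
      ∑ f ∈ Finset.univ.filter (fun f : ∀ i, Fin (n i) => f i = m), wA f
      = ∑ f ∈ Finset.univ.filter (fun f : ∀ i, Fin (n i) => f i = m), wB f := by
    intro i m
    have hcq : ((∑ f ∈ Finset.univ.filter (fun f : ∀ i, Fin (n i) => f i = m), wA f : ℕ) : ℚ)
        = ((∑ f ∈ Finset.univ.filter (fun f : ∀ i, Fin (n i) => f i = m), wB f : ℕ) : ℚ) := by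
      push_cast
      rw [Finset.sum_congr rfl (fun f _ => hwAcast f),
        Finset.sum_congr rfl (fun f _ => hwBcast f),
        ← Finset.sum_mul, ← Finset.sum_mul, hQmarg i m]
    exact_mod_cast hcq
  have hsuppA : ∀ f, wA f ≠ 0 → γ (Cell f) ≠ 0 := by
    intro f hw h0
    apply hw
    have hz : q (Sum.inl f) = 0 := hqA0 f h0
    simp [hwA, hz]
  have hsuppB : ∀ f, wB f ≠ 0 → γ' (Cell f) ≠ 0 := by
    intro f hw h0
    apply hw
    have hz : q (Sum.inr f) = 0 := hqB0 f h0
    simp [hwB, hz]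
  have hwafb : wA fb ≠ 0 := by
    intro h0
    have h1 := hwAcast fb
    rw [h0] at h1
    have hx0 : xval (Sum.inl fb) ≠ 0 := by
      simp only [hxval, Sum.elim_inl]
      exact ENNReal.toReal_ne_zero.2 ⟨hγfb, measure_ne_top _ _⟩
    have h2 : 0 < q (Sum.inl fb) := hqpos _ hx0
    have h3 : (0:ℚ) < q (Sum.inl fb) * D := by
      apply mul_pos h2
      exact_mod_cast hDpos
    rw [← h1] at h3
    simp at h3
  -- matching equivalences
  have hτex : ∀ j : Fin (N+1),
      ∃ τ : (Σ f : ∀ i, Fin (n i), Fin (wB f)) ≃ (Σ f : ∀ i, Fin (n i), Fin (wA f)),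
      ∀ x, (τ x).1 j = x.1 j := by
    intro j
    obtain ⟨τ, hτ⟩ := exists_matching_equiv wA wB (fun f => f j) (fun m => hWmarg j m)
    exact ⟨τ, fun x => hτ x⟩
  choose τ hτp using hτex
  set EA : (Σ f : ∀ i, Fin (n i), Fin (wA f)) ≃ Fin (Fintype.card (Σ f : ∀ i, Fin (n i), Fin (wA f))) :=
    Fintype.equivFin _ with hEA
  set P : (Σ f : ∀ i, Fin (n i), Fin (wA f)) → (∀ j, X j) :=
    fun y => if y.1 = fb ∧ (y.2 : ℕ) = 0 then xb else u y.1 with hP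
  have hPΓ : ∀ y, P y ∈ Γ := by
    intro y
    rw [hP]
    by_cases h : y.1 = fb ∧ (y.2 : ℕ) = 0
    · simp only [if_pos h]; exact hxbΓ
    · simp only [if_neg h]
      exact (hu y.1 (hsuppA y.1 (y.2.pos.ne'))).1
  have hPCell : ∀ y, P y ∈ Cell y.1 := by
    intro y
    rw [hP]
    by_cases h : y.1 = fb ∧ (y.2 : ℕ) = 0
    · simp only [if_pos h]
      rw [h.1]
      exact hxbCell
    · simp only [if_neg h]
      exact (hu y.1 (hsuppA y.1 (y.2.pos.ne'))).2
  have hfbpos : 0 < wA fb := Nat.pos_of_ne_zero hwafb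
  set i0 : Fin (Fintype.card (Σ f : ∀ i, Fin (n i), Fin (wA f))) := EA ⟨fb, ⟨0, hfbpos⟩⟩ with hi0
  have hpi0 : P (EA.symm i0) = xb := by
    rw [hi0, Equiv.symm_apply_apply, hP]
    simp
  set σ : Fin (N+1) → Equiv.Perm (Fin (Fintype.card (Σ f : ∀ i, Fin (n i), Fin (wA f)))) :=
    fun j => ((τ 0).trans EA).symm.trans ((τ j).trans EA) with hσ
  have hσ0 : σ 0 = 1 := by
    rw [hσ]
    exact Equiv.symm_trans_self _
  have hkey := hicm (Fintype.card (Σ f : ∀ i, Fin (n i), Fin (wA f)))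
    (fun i' => P (EA.symm i')) (fun i' => hPΓ _) σ hσ0
  have hub : ∀ i', c (fun j => P (EA.symm (σ j i')) j) < t := by
    intro i'
    set y : Σ f : ∀ i, Fin (n i), Fin (wB f) := ((τ 0).trans EA).symm i' with hy
    have hyB : γ' (Cell y.1) ≠ 0 := hsuppB y.1 (y.2.pos.ne')
    have hvmem := hv y.1 hyB
    have hcoord : ∀ j, P (EA.symm (σ j i')) j ∈ cell j (y.1 j) := by
      intro j
      have h1 : EA.symm (σ j i') = τ j y := by
        rw [hσ, hy]
        simp
      rw [h1]
      have h3 := hPCell (τ j y) j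
      rw [hτp j y] at h3
      exact h3
    have hvC1 : v y.1 ∈ C1 :=
      ⟨hCellK y.1 hvmem.1, Set.mem_preimage.2 (Set.mem_Iic.2 (le_of_lt hvmem.2))⟩
    apply hδsep (v y.1) hvC1
    · rw [hKp, Set.mem_univ_pi]
      intro j
      exact hcellK j (y.1 j) (hcoord j)
    · intro j
      exact hcelldiam j (y.1 j) _ (hcoord j) _ (hvmem.1 j)
  haveI : Nonempty (Fin (Fintype.card (Σ f : ∀ i, Fin (n i), Fin (wA f)))) := ⟨i0⟩
  obtain ⟨imax, himax⟩ := Finite.exists_max (fun i' => c (fun j => P (EA.symm (σ j i')) j))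
  have hsup2 : (⨆ i', c (fun j => P (EA.symm (σ j i')) j)) < t :=
    lt_of_le_of_lt (iSup_le fun i' => himax i') (hub imax)
  have hsup1 : c xb ≤ ⨆ i', c (P (EA.symm i')) := by
    have hle := le_iSup (fun i' => c (P (EA.symm i'))) i0
    rwa [hpi0] at hle
  exact absurd (lt_of_le_of_lt (hsup1.trans hkey) (hsup2.trans hxbc)) (lt_irrefl _)

/-- **De Pascale–Kausamo.** On Polish spaces, for a continuous cost
`c : X₁ × ⋯ × X_N → ℝ ∪ {+∞}` and marginals with compact support, every infinitely
cyclically monotone plan is optimal for the `L^∞` transport problem (it minimizes the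
`γ`-essential supremum of `c` among all couplings of the given marginals). -/
theorem infinitelyCCyclicallyMonotone_implies_Linfty_optimal
    {N : ℕ} {X : Fin (N + 1) → Type*}
    [∀ i, TopologicalSpace (X i)] [∀ i, PolishSpace (X i)]
    [∀ i, MeasurableSpace (X i)] [∀ i, BorelSpace (X i)]
    (μ : ∀ i, Measure (X i)) [∀ i, IsProbabilityMeasure (μ i)]
    (hcompact : ∀ i, ∃ K : Set (X i), IsCompact K ∧ μ i K = 1)
    (c : (∀ i, X i) → EReal) (hc : Continuous c)
    (γ : Measure (∀ i, X i))
    (hγ : ∀ i, γ.map (fun x => x i) = μ i)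
    (hmono : ∃ Γ : Set (∀ i, X i), InfinitelyCCyclicallyMonotone c Γ ∧ γ Γ = 1) :
    ∀ γ' : Measure (∀ i, X i), (∀ i, γ'.map (fun x => x i) = μ i) →
      essSup c γ ≤ essSup c γ' :=
  main_thm μ hcompact c hc γ hγ hmono
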